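/- Let p(s) = k_I + k_P s + k_D s² + B(s) with B ∈ ℝ[s] of degree n ≥ 3. If p is Hurwitz stable (all roots in the open left half-plane), then the equation ω k_P = −Im B(jω) has at least E(n−1)/2 solutions ω in (0, ∞), where E(m) denotes the largest even number ≤ m−0, i.e., the nearest smaller-or-equal even number. -/

import Mathlib

open Polynomial

/-- `E m` is the nearest even number `≤ m`. -/
def nearestEven (m : ℕ) : ℕ := if Even m then m else m - 1

namespace KPAux

open Real Filter Topology Multiset Complex

/-- The phase (argument) function of the product `∏ (iω - z)` over a multiset of
left half-plane numbers. -/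
noncomputable def phase (R : Multiset ℂ) (ω : ℝ) : ℝ :=
  (R.map (fun z => Real.arctan ((ω - z.im) / (-z.re)))).sum

lemma continuous_phase (R : Multiset ℂ) : Continuous (phase R) := by
  induction R using Multiset.induction with
  | empty => rw [show phase 0 = fun _ => (0:ℝ) from funext fun ω => by simp [phase]]; exact continuous_const
  | cons z S ih =>
    have h : phase (z ::ₘ S) = fun ω => Real.arctan ((ω - z.im) / (-z.re)) + phase S ω := by
      funext ω; simp [phase]
    rw [h]
    exact (Real.continuous_arctan.comp
      ((continuous_id.sub continuous_const).div_const _)).add ih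

lemma strictMono_phase {R : Multiset ℂ} (hR : ∀ z ∈ R, z.re < 0) (hne : R ≠ 0) :
    StrictMono (phase R) := by
  intro a b hab
  refine Multiset.sum_lt_sum_of_nonempty hne (fun z hz => ?_)
  have hz' : 0 < -z.re := by linarith [hR z hz]
  exact Real.arctan_strictMono (by exact div_lt_div_of_pos_right (by linarith) hz')

lemma phase_lt {R : Multiset ℂ} (hne : R ≠ 0) (ω : ℝ) :
    phase R ω < (Multiset.card R : ℝ) * (π / 2) := by
  have h : (Multiset.card R : ℝ) * (π / 2) = (R.map (fun _ : ℂ => π / 2)).sum := by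
    simp [Multiset.map_const', Multiset.sum_replicate, nsmul_eq_mul]
  rw [h]
  exact Multiset.sum_lt_sum_of_nonempty hne (fun z _ => Real.arctan_lt_pi_div_two _)

lemma tendsto_phase (R : Multiset ℂ) (hR : ∀ z ∈ R, z.re < 0) :
    Tendsto (phase R) atTop (nhds ((Multiset.card R : ℝ) * (π / 2))) := by
  induction R using Multiset.induction with
  | empty => rw [show phase 0 = fun _ => (0:ℝ) from funext fun ω => by simp [phase]]; simpa using tendsto_const_nhds
  | cons z S ih =>
    have hz : z.re < 0 := hR z (Multiset.mem_cons_self z S)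
    have hS : ∀ y ∈ S, y.re < 0 := fun y hy => hR y (Multiset.mem_cons_of_mem hy)
    have h1 : Tendsto (fun ω : ℝ => (ω - z.im) / (-z.re)) atTop atTop := by
      apply Tendsto.atTop_div_const (by linarith)
      exact tendsto_atTop_add_const_right _ _ tendsto_id
    have h2 : Tendsto (fun ω : ℝ => Real.arctan ((ω - z.im) / (-z.re))) atTop
        (nhds (π / 2)) :=
      (Real.tendsto_arctan_atTop.mono_right nhdsWithin_le_nhds).comp h1
    have h3 : phase (z ::ₘ S) = fun ω => Real.arctan ((ω - z.im) / (-z.re)) + phase S ω := by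
      funext ω; simp [phase]
    rw [h3]
    have := h2.add (ih hS)
    convert this using 2
    push_cast [Multiset.card_cons]
    ring

lemma phase_zero {R : Multiset ℂ} (hconj : R.map (starRingEnd ℂ) = R) :
    phase R 0 = 0 := by
  have key : phase R 0 = -phase R 0 := by
    conv_lhs => rw [phase, ← hconj, Multiset.map_map]
    have : ∀ z : ℂ,
        Real.arctan ((0 - ((starRingEnd ℂ) z).im) / (-((starRingEnd ℂ) z).re))
          = -Real.arctan ((0 - z.im) / (-z.re)) := by
      intro z
      rw [← Real.arctan_neg]
      congr 1
      simp [Complex.conj_re, Complex.conj_im]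
      ring
    calc (R.map ((fun z : ℂ => Real.arctan ((0 - z.im) / (-z.re))) ∘ (starRingEnd ℂ))).sum
        = (R.map (fun z : ℂ => -Real.arctan ((0 - z.im) / (-z.re)))).sum := by
          congr 1; apply Multiset.map_congr rfl; intro z _; exact this z
      _ = -phase R 0 := by
          rw [phase, ← Multiset.sum_map_neg']
          congr 1
          rw [Multiset.map_map]
          rfl
  linarith

/-- polar decomposition of the product. -/
lemma prod_polar (ω : ℝ) : ∀ (R : Multiset ℂ), (∀ z ∈ R, z.re < 0) →
    (R.map (fun z => (ω : ℂ) * Complex.I - z)).prod =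
      ((R.map (fun z => ‖(ω : ℂ) * Complex.I - z‖)).prod : ℝ) *
        Complex.exp ((phase R ω : ℝ) * Complex.I) := by
  intro R
  induction R using Multiset.induction with
  | empty => simp [phase]
  | cons z S ih =>
    intro hR
    have hz : z.re < 0 := hR z (Multiset.mem_cons_self z S)
    have hS : ∀ y ∈ S, y.re < 0 := fun y hy => hR y (Multiset.mem_cons_of_mem hy)
    set w : ℂ := (ω : ℂ) * Complex.I - z with hw
    have hwre : 0 < w.re := by
      simp [hw, Complex.sub_re]
      linarith
    have hwim : w.im = ω - z.im := by simp [hw, Complex.sub_im]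
    have habs : |Complex.arg w| < π / 2 :=
      Complex.abs_arg_lt_pi_div_two_iff.mpr (Or.inl hwre)
    rw [abs_lt] at habs
    have harg : Complex.arg w = Real.arctan ((ω - z.im) / (-z.re)) := by
      have h1 : Real.tan (Complex.arg w) = w.im / w.re := Complex.tan_arg w
      have h2 : Real.arctan (Real.tan (Complex.arg w)) = Complex.arg w :=
        Real.arctan_tan habs.1 habs.2
      rw [← h2, h1, hwim]
      congr 1
      congr 1
      simp [hw, Complex.sub_re]
    have hpolar : w = (‖w‖ : ℂ) * Complex.exp ((Complex.arg w : ℝ) * Complex.I) :=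
      (Complex.norm_mul_exp_arg_mul_I w).symm
    have hphase : phase (z ::ₘ S) ω = Real.arctan ((ω - z.im) / (-z.re)) + phase S ω := by
      simp [phase]
    simp only [Multiset.map_cons, Multiset.prod_cons]
    rw [ih hS, hphase]
    have hfirst : (ω : ℂ) * Complex.I - z
        = (‖(ω : ℂ) * Complex.I - z‖ : ℂ)
          * Complex.exp ((Real.arctan ((ω - z.im) / (-z.re)) : ℝ) * Complex.I) := by
      rw [← hw, ← harg]; exact hpolar
    conv_lhs => rw [hfirst]
    push_cast
    rw [add_mul, Complex.exp_add]
    ring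

lemma multiset_prod_pos : ∀ (s : Multiset ℝ), (∀ x ∈ s, 0 < x) → 0 < s.prod := by
  intro s
  induction s using Multiset.induction with
  | empty => intro _; simp
  | cons a t ih =>
    intro h
    rw [Multiset.prod_cons]
    exact mul_pos (h a (Multiset.mem_cons_self a t))
      (ih (fun x hx => h x (Multiset.mem_cons_of_mem hx)))

end KPAux

/-- k_P-problem necessary condition (A = 1): if `p = k_I + k_P s + k_D s² + B` is
Hurwitz stable with `deg B = n ≥ 3`, then there are at least `E(n−1)/2` singular
frequencies `ω ∈ (0, ∞)`, i.e. solutions of `ω k_P = −Im B(jω)`. -/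
theorem kP_necessary_condition (B : Polynomial ℝ) (kP kI kD : ℝ)
    (hn : 3 ≤ B.natDegree)
    (hstab : ∀ z : ℂ,
      Polynomial.aeval z (Polynomial.C kI + Polynomial.C kP * Polynomial.X
        + Polynomial.C kD * Polynomial.X^2 + B) = 0 → z.re < 0) :
    nearestEven (B.natDegree - 1) / 2 ≤
      {ω : ℝ | 0 < ω ∧
        ω * kP = -(Polynomial.aeval ((ω : ℂ) * Complex.I) B).im}.ncard := by
  classical
  have pi_pos := Real.pi_pos
  set p : Polynomial ℝ := Polynomial.C kI + Polynomial.C kP * Polynomial.X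
      + Polynomial.C kD * Polynomial.X ^ 2 + B with hp
  set n := B.natDegree with hnn
  have hq : (Polynomial.C kI + Polynomial.C kP * Polynomial.X
      + Polynomial.C kD * Polynomial.X ^ 2 : Polynomial ℝ).natDegree < B.natDegree := by
    have h2 : (Polynomial.C kI + Polynomial.C kP * Polynomial.X
        + Polynomial.C kD * Polynomial.X ^ 2 : Polynomial ℝ).natDegree ≤ 2 := by
      compute_degree
    omega
  have hpn : p.natDegree = n := by
    rw [hp, Polynomial.natDegree_add_eq_right_of_natDegree_lt hq]
  have hp0 : p ≠ 0 := by
    intro h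
    rw [h, Polynomial.natDegree_zero] at hpn
    omega
  set pC : Polynomial ℂ := p.map (algebraMap ℝ ℂ) with hpC
  have hsplit : pC.Splits := IsAlgClosed.splits pC
  have hpC0 : pC ≠ 0 := by
    rw [hpC, Ne, Polynomial.map_eq_zero]
    exact hp0
  have hdeg : pC.natDegree = n := by
    rw [hpC, Polynomial.natDegree_map]; exact hpn
  set R : Multiset ℂ := pC.roots with hR
  have hcard : Multiset.card R = n := by
    rw [hR, ← hsplit.natDegree_eq_card_roots]
    exact hdeg
  have hRre : ∀ z ∈ R, z.re < 0 := by
    intro z hz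
    apply hstab z
    have hroot : pC.eval z = 0 := (Polynomial.mem_roots hpC0).mp hz
    rw [Polynomial.aeval_def, ← Polynomial.eval_map]
    exact hroot
  have hRne : R ≠ 0 := by
    intro h
    rw [h] at hcard
    simp at hcard
    omega
  have hmapconj : pC.map (starRingEnd ℂ) = pC := by
    rw [hpC, Polynomial.map_map]
    congr 1
    ext x
    simp [Complex.conj_ofReal]
  have hconj : R.map (starRingEnd ℂ) = R := by
    have h1 : (pC.map (starRingEnd ℂ)).roots = R.map (starRingEnd ℂ) :=
      (IsAlgClosed.splits pC).roots_map_of_injective (starRingEnd ℂ).injective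
    rw [hmapconj] at h1
    exact h1.symm
  have hfact : pC = Polynomial.C pC.leadingCoeff
      * (R.map (fun z => Polynomial.X - Polynomial.C z)).prod :=
    (IsAlgClosed.splits pC).eq_prod_roots
  set c : ℝ := p.leadingCoeff with hcdef
  have hlc : pC.leadingCoeff = (c : ℂ) := by
    rw [hpC, Polynomial.leadingCoeff_map]; rfl
  have hc0 : c ≠ 0 := Polynomial.leadingCoeff_ne_zero.mpr hp0
  set Pr : ℝ → ℝ := fun ω => (R.map (fun z => ‖(ω : ℂ) * Complex.I - z‖)).prod
    with hPrdef
  have hPr : ∀ ω : ℝ, 0 < Pr ω := by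
    intro ω
    apply KPAux.multiset_prod_pos
    intro x hx
    rw [Multiset.mem_map] at hx
    obtain ⟨z, hz, rfl⟩ := hx
    apply norm_pos_iff.mpr
    intro h0
    have : ((ω : ℂ) * Complex.I - z).re = -z.re := by simp [Complex.sub_re]
    rw [h0] at this
    simp at this
    linarith [hRre z hz]
  -- the central imaginary-part identity
  have hIm : ∀ ω : ℝ, ω * kP + (Polynomial.aeval ((ω : ℂ) * Complex.I) B).im
      = c * Pr ω * Real.sin (KPAux.phase R ω) := by
    intro ω
    have h1 : Polynomial.aeval ((ω : ℂ) * Complex.I) p = pC.eval ((ω : ℂ) * Complex.I) := by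
      rw [Polynomial.aeval_def, Polynomial.eval_map]
    have h2 : pC.eval ((ω : ℂ) * Complex.I)
        = (c : ℂ) * ((R.map (fun z => (ω : ℂ) * Complex.I - z)).prod) := by
      conv_lhs => rw [hfact]
      rw [Polynomial.eval_mul, Polynomial.eval_C, hlc, Polynomial.eval_multiset_prod]
      congr 2
      rw [Multiset.map_map]
      apply Multiset.map_congr rfl
      intro z _
      simp
    rw [KPAux.prod_polar ω R hRre] at h2
    have h4 : Polynomial.aeval ((ω : ℂ) * Complex.I) p
        = (kI : ℂ) + (kP : ℂ) * ((ω : ℂ) * Complex.I)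
          + (kD : ℂ) * ((ω : ℂ) * Complex.I) ^ 2
          + Polynomial.aeval ((ω : ℂ) * Complex.I) B := by
      rw [hp]
      simp
    have h5 := congrArg Complex.im (h4.symm.trans (h1.trans h2))
    have h6 : ((kI : ℂ) + (kP : ℂ) * ((ω : ℂ) * Complex.I)
        + (kD : ℂ) * ((ω : ℂ) * Complex.I) ^ 2
        + Polynomial.aeval ((ω : ℂ) * Complex.I) B).im
        = ω * kP + (Polynomial.aeval ((ω : ℂ) * Complex.I) B).im := by
      simp [mul_pow, Complex.I_sq, ← Complex.ofReal_pow]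
      ring
    have h7 : ((c : ℂ) * ((Pr ω : ℝ) * Complex.exp ((KPAux.phase R ω : ℝ) * Complex.I) : ℂ)).im
        = c * Pr ω * Real.sin (KPAux.phase R ω) := by
      rw [Complex.exp_mul_I]
      simp [Complex.mul_im, Complex.mul_re, Complex.sin_ofReal_re, Complex.cos_ofReal_re]
      ring
    rw [h6, h7] at h5
    exact h5
  set S : Set ℝ := {ω : ℝ | 0 < ω ∧
      ω * kP = -(Polynomial.aeval ((ω : ℂ) * Complex.I) B).im} with hSdef
  have hSiff : ∀ ω : ℝ, ω ∈ S ↔ 0 < ω ∧ Real.sin (KPAux.phase R ω) = 0 := by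
    intro ω
    rw [hSdef]
    simp only [Set.mem_setOf_eq]
    apply and_congr_right
    intro _
    rw [eq_neg_iff_add_eq_zero, hIm ω, mul_eq_zero, mul_eq_zero]
    simp [hc0, (hPr ω).ne']
  have hθ0 : KPAux.phase R 0 = 0 := KPAux.phase_zero hconj
  have hmono := KPAux.strictMono_phase hRre hRne
  have htend := KPAux.tendsto_phase R hRre
  set N := nearestEven (n - 1) / 2 with hNdef
  have h2N : 2 * N ≤ n - 1 := by
    have h1 : N * 2 ≤ nearestEven (n - 1) := Nat.div_mul_le_self _ 2
    have h2 : nearestEven (n - 1) ≤ n - 1 := by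
      unfold nearestEven
      split <;> omega
    omega
  have hexists : ∀ k : ℕ, k ∈ Finset.Icc 1 N →
      ∃ ω, ω ∈ S ∧ KPAux.phase R ω = (k : ℝ) * Real.pi := by
    intro k hk
    rw [Finset.mem_Icc] at hk
    have hk1 : (1 : ℝ) ≤ (k : ℝ) := by exact_mod_cast hk.1
    have hkpos : (0 : ℝ) < (k : ℝ) * Real.pi := by nlinarith
    have hklt : (k : ℝ) * Real.pi < (Multiset.card R : ℝ) * (Real.pi / 2) := by
      rw [hcard]
      have h2k : 2 * k < n := by omega
      have h2k' : (2 * k : ℝ) < (n : ℝ) := by exact_mod_cast h2k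
      push_cast at h2k' ⊢
      nlinarith
    obtain ⟨ω₂, hω₂⟩ : ∃ ω₂, (k : ℝ) * Real.pi < KPAux.phase R ω₂ :=
      (htend.eventually (eventually_gt_nhds hklt)).exists
    set b := max ω₂ 1 with hbdef
    have hb0 : (0 : ℝ) ≤ b := le_trans zero_le_one (le_max_right _ _)
    have hωb : (k : ℝ) * Real.pi ≤ KPAux.phase R b :=
      le_of_lt (lt_of_lt_of_le hω₂ (hmono.monotone (le_max_left _ _)))
    have hmem : (k : ℝ) * Real.pi ∈ Set.Icc (KPAux.phase R 0) (KPAux.phase R b) := by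
      rw [hθ0]; exact ⟨le_of_lt hkpos, hωb⟩
    obtain ⟨ω, hωI, hωeq⟩ :=
      intermediate_value_Icc hb0 (KPAux.continuous_phase R).continuousOn hmem
    have hωpos : 0 < ω := by
      rcases eq_or_lt_of_le hωI.1 with h | h
      · exfalso
        rw [← h, hθ0] at hωeq
        linarith
      · exact h
    refine ⟨ω, ?_, hωeq⟩
    rw [hSiff ω]
    refine ⟨hωpos, ?_⟩
    rw [hωeq]
    exact Real.sin_nat_mul_pi k
  choose! f hfS hfθ using hexists
  set T : Finset ℝ := (Finset.Icc 1 N).image f with hTdef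
  have hinj : Set.InjOn f (Finset.Icc 1 N) := by
    intro a ha b hb hab
    have ha' : a ∈ Finset.Icc 1 N := ha
    have hb' : b ∈ Finset.Icc 1 N := hb
    have h1 : (a : ℝ) * Real.pi = (b : ℝ) * Real.pi := by
      rw [← hfθ a ha', ← hfθ b hb', hab]
    have h2 : (a : ℝ) = (b : ℝ) := mul_right_cancel₀ (ne_of_gt pi_pos) h1
    exact_mod_cast h2
  have hTcard : T.card = N := by
    rw [hTdef, Finset.card_image_of_injOn hinj, Nat.card_Icc]
    omega
  have hTsub : (T : Set ℝ) ⊆ S := by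
    intro x hx
    rw [hTdef] at hx
    simp only [Finset.coe_image, Set.mem_image, Finset.mem_coe] at hx
    obtain ⟨k, hk, rfl⟩ := hx
    exact hfS k hk
  have hSfin : S.Finite := by
    apply Set.Finite.of_finite_image (f := KPAux.phase R) ?_ (hmono.injective.injOn)
    apply Set.Finite.subset
      (Set.Finite.image (fun m : ℤ => (m : ℝ) * Real.pi) (Set.finite_Icc (1 : ℤ) (n : ℤ)))
    rintro x ⟨ω, hω, rfl⟩
    have hωS := (hSiff ω).mp hω
    obtain ⟨m, hm⟩ := Real.sin_eq_zero_iff.mp hωS.2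
    have h1 : 0 < KPAux.phase R ω := by
      rw [← hθ0]
      exact hmono hωS.1
    have h2 : KPAux.phase R ω < (n : ℝ) * (Real.pi / 2) := by
      have := KPAux.phase_lt hRne ω
      rwa [hcard] at this
    have hm1 : (1 : ℤ) ≤ m := by
      by_contra hcon
      push_neg at hcon
      have : (m : ℝ) ≤ 0 := by exact_mod_cast (by omega : m ≤ 0)
      nlinarith
    have hm2 : m ≤ (n : ℤ) := by
      by_contra hcon
      push_neg at hcon
      have : (n : ℝ) < (m : ℝ) := by exact_mod_cast hcon
      nlinarith
    exact ⟨m, ⟨hm1, hm2⟩, hm⟩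
  calc N = T.card := hTcard.symm
    _ = (T : Set ℝ).ncard := (Set.ncard_coe_finset T).symm
    _ ≤ S.ncard := Set.ncard_le_ncard hTsub hSfin
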